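/- arXiv:2301.09385 — 2 statements merged into one kernel-verified Lean document; each statement's English description precedes it below -/
import Mathlib

section
/- Let n ≥ 1 and m ≥ 1 be integers, let x_1 ≤ x_2 ≤ ⋯ ≤ x_n be real numbers with x_j ≥ 1 for all j, and let a > 0. Define φ_n(t) = (1/n) Σ_{j=1}^n exp(i t x_j^(1/m)) and ξ_n(t) = Σ_{j=1}^n v_{j,m} exp(i t x_j), where v_{j,m} = n^(−m)[(n − j + 1)^m − (n − j)^m]. Then n · ∫_{−∞}^{∞} |φ_n(t) − ξ_n(t)|² e^(−a|t|) dt = (1/n) Σ_{j=1}^n Σ_{k=1}^n [ 2a/(a² + (x_j^(1/m) − x_k^(1/m))²) − n v_{j,m} · 4a/(a² + (x_j − x_k^(1/m))²) + n² v_{j,m} v_{k,m} · 2a/(a² + (x_j − x_k)²) ]. -/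
open MeasureTheory Real Set Filter

/-- Reflection for integrability on a left ray. -/
private lemma integrableOn_Iic_of_comp_neg {f : ℝ → ℝ} {c : ℝ}
    (h : IntegrableOn (fun x => f (-x)) (Ioi (-c))) : IntegrableOn f (Iic c) := by
  have A : MeasurableEmbedding fun x : ℝ => -x :=
    (Homeomorph.neg ℝ).isClosedEmbedding.measurableEmbedding
  have hpre : (fun x : ℝ => -x) ⁻¹' Iic c = Ici (-c) := by
    ext y; simp [neg_le]
  rw [IntegrableOn, ← Measure.map_neg_eq_self (volume : Measure ℝ),
    Measure.restrict_map A.measurable measurableSet_Iic, A.integrable_map_iff, hpre]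
  exact Iff.mpr integrableOn_Ici_iff_integrableOn_Ioi h

private lemma integrable_cos_mul_exp {a : ℝ} (ha : 0 < a) (c : ℝ) :
    Integrable (fun t : ℝ => Real.cos (t * c) * Real.exp (-a * |t|)) := by
  have hcont : Continuous fun t : ℝ => Real.cos (t * c) * Real.exp (-a * |t|) := by
    fun_prop
  have hIoi : IntegrableOn (fun t : ℝ => Real.cos (t * c) * Real.exp (-a * |t|)) (Ioi 0) := by
    refine Integrable.mono' (exp_neg_integrableOn_Ioi 0 ha) hcont.aestronglyMeasurable.restrict ?_
    filter_upwards [ae_restrict_mem measurableSet_Ioi] with t ht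
    rw [abs_of_pos ht, Real.norm_eq_abs, abs_mul, abs_of_pos (Real.exp_pos _)]
    nlinarith [abs_cos_le_one (t * c), Real.exp_pos (-a * t), abs_nonneg (Real.cos (t * c))]
  have hIic : IntegrableOn (fun t : ℝ => Real.cos (t * c) * Real.exp (-a * |t|)) (Iic 0) := by
    apply integrableOn_Iic_of_comp_neg (c := 0)
    rw [neg_zero]
    have : (fun x : ℝ => Real.cos (-x * c) * Real.exp (-a * |(-x)|))
        = fun t : ℝ => Real.cos (t * c) * Real.exp (-a * |t|) := by
      funext t; rw [abs_neg, neg_mul, Real.cos_neg]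
    rw [this]; exact hIoi
  have h := hIic.union hIoi
  rwa [Set.Iic_union_Ioi, integrableOn_univ] at h

private lemma integral_Ioi_cos_mul_exp {a : ℝ} (ha : 0 < a) (c : ℝ) :
    ∫ t in Ioi (0:ℝ), Real.cos (t * c) * Real.exp (-a * t) = a / (a ^ 2 + c ^ 2) := by
  have hdpos : (0:ℝ) < a ^ 2 + c ^ 2 := by positivity
  set F : ℝ → ℝ :=
    fun t => Real.exp (-a * t) * (c * Real.sin (t * c) - a * Real.cos (t * c)) / (a ^ 2 + c ^ 2)
    with hF
  have hFc : Continuous F := by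
    apply Continuous.div_const
    fun_prop
  have hderiv : ∀ t ∈ Ioi (0:ℝ), HasDerivAt F (Real.cos (t * c) * Real.exp (-a * t)) t := by
    intro t _
    have h1 : HasDerivAt (fun t : ℝ => Real.exp (-a * t)) (Real.exp (-a * t) * (-a * 1)) t :=
      ((hasDerivAt_id t).const_mul (-a)).exp
    have hs : HasDerivAt (fun t : ℝ => Real.sin (t * c)) (Real.cos (t * c) * (1 * c)) t :=
      ((hasDerivAt_id t).mul_const c).sin
    have hc : HasDerivAt (fun t : ℝ => Real.cos (t * c)) (-Real.sin (t * c) * (1 * c)) t :=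
      ((hasDerivAt_id t).mul_const c).cos
    have h2 : HasDerivAt (fun t : ℝ => c * Real.sin (t * c) - a * Real.cos (t * c))
        (c * (Real.cos (t * c) * (1 * c)) - a * (-Real.sin (t * c) * (1 * c))) t :=
      (hs.const_mul c).sub (hc.const_mul a)
    have h3 := (h1.mul h2).div_const (a ^ 2 + c ^ 2)
    refine HasDerivAt.congr_deriv h3 ?_
    rw [div_eq_iff hdpos.ne']
    ring
  have hint : IntegrableOn (fun t : ℝ => Real.cos (t * c) * Real.exp (-a * t)) (Ioi 0) := by
    refine Integrable.mono' (exp_neg_integrableOn_Ioi 0 ha)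
      ((by fun_prop : Continuous fun t : ℝ => Real.cos (t * c) * Real.exp (-a * t)).aestronglyMeasurable.restrict) ?_
    filter_upwards with t
    rw [Real.norm_eq_abs, abs_mul, abs_of_pos (Real.exp_pos _)]
    nlinarith [abs_cos_le_one (t * c), Real.exp_pos (-a * t), abs_nonneg (Real.cos (t * c))]
  have htend : Tendsto F atTop (nhds 0) := by
    have hexp : Tendsto (fun t : ℝ => Real.exp (-a * t)) atTop (nhds 0) :=
      Real.tendsto_exp_atBot.comp (tendsto_id.const_mul_atTop_of_neg (by linarith))
    have hb : Tendsto (fun t : ℝ => Real.exp (-a * t) * ((|c| + a) / (a ^ 2 + c ^ 2)))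
        atTop (nhds 0) := by
      simpa using hexp.mul_const ((|c| + a) / (a ^ 2 + c ^ 2))
    refine squeeze_zero_norm (fun t => ?_) hb
    rw [Real.norm_eq_abs, hF, abs_div, abs_of_pos hdpos, abs_mul, abs_of_pos (Real.exp_pos _),
      mul_div_assoc]
    gcongr
    calc |c * Real.sin (t * c) - a * Real.cos (t * c)|
        ≤ |c * Real.sin (t * c)| + |a * Real.cos (t * c)| := abs_sub _ _
      _ ≤ |c| + a := by
          rw [abs_mul, abs_mul, abs_of_pos ha]
          have h1 := abs_sin_le_one (t * c)
          have h2 := abs_cos_le_one (t * c)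
          nlinarith [abs_nonneg c]
  have := integral_Ioi_of_hasDerivAt_of_tendsto (hFc.continuousWithinAt) hderiv hint htend
  rw [this, hF]
  simp
  field_simp

private lemma integral_cos_mul_exp_abs {a : ℝ} (ha : 0 < a) (c : ℝ) :
    ∫ t : ℝ, Real.cos (t * c) * Real.exp (-a * |t|) = 2 * a / (a ^ 2 + c ^ 2) := by
  have hint := integrable_cos_mul_exp ha c
  rw [← integral_add_compl measurableSet_Ioi hint, compl_Ioi]
  have hIoi : ∫ t in Ioi (0:ℝ), Real.cos (t * c) * Real.exp (-a * |t|) = a / (a ^ 2 + c ^ 2) := by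
    rw [setIntegral_congr_fun measurableSet_Ioi
      (g := fun t => Real.cos (t * c) * Real.exp (-a * t))
      (fun t ht => by rw [abs_of_pos ht])]
    exact integral_Ioi_cos_mul_exp ha c
  have hIic : ∫ t in Iic (0:ℝ), Real.cos (t * c) * Real.exp (-a * |t|) = a / (a ^ 2 + c ^ 2) := by
    have heq : (fun t : ℝ => Real.cos (t * c) * Real.exp (-a * |t|))
        = fun t : ℝ => Real.cos (-t * c) * Real.exp (-a * |(-t)|) := by
      funext t; rw [abs_neg, show -t * c = -(t * c) from neg_mul t c, Real.cos_neg]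
    rw [heq]
    rw [integral_comp_neg_Iic 0 (fun t : ℝ => Real.cos (t * c) * Real.exp (-a * |t|))]
    rw [neg_zero]
    exact hIoi
  rw [hIoi, hIic]
  ring

private lemma re_mul_conj_exp (t p q α β : ℝ) :
    (((p : ℝ) : ℂ) * Complex.exp (Complex.I * (t : ℂ) * (α : ℂ)) *
      (starRingEnd ℂ) (((q : ℝ) : ℂ) * Complex.exp (Complex.I * (t : ℂ) * (β : ℂ)))).re
      = p * q * Real.cos (t * (α - β)) := by
  have h1 : (starRingEnd ℂ) (((q : ℝ) : ℂ) * Complex.exp (Complex.I * (t : ℂ) * (β : ℂ)))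
      = ((q : ℝ) : ℂ) * Complex.exp (-(Complex.I * (t : ℂ) * (β : ℂ))) := by
    rw [map_mul, ← Complex.exp_conj]
    congr 1
    · exact Complex.conj_ofReal q
    · congr 1
      rw [map_mul, map_mul, Complex.conj_I, Complex.conj_ofReal, Complex.conj_ofReal]
      ring
  rw [h1]
  have harg : Complex.I * (t : ℂ) * (α : ℂ) + -(Complex.I * (t : ℂ) * (β : ℂ))
      = ((t * (α - β) : ℝ) : ℂ) * Complex.I := by
    push_cast; ring
  have h2 : ((p : ℝ) : ℂ) * Complex.exp (Complex.I * (t : ℂ) * (α : ℂ)) *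
      (((q : ℝ) : ℂ) * Complex.exp (-(Complex.I * (t : ℂ) * (β : ℂ))))
      = ((p * q : ℝ) : ℂ) * Complex.exp (((t * (α - β) : ℝ) : ℂ) * Complex.I) := by
    rw [mul_mul_mul_comm, ← Complex.exp_add, harg]
    push_cast; ring
  rw [h2, Complex.re_ofReal_mul, Complex.exp_ofReal_mul_I_re]

private lemma re_sub_mul_conj_sub (t p q r s α β γ δ : ℝ) :
    ((((p : ℝ) : ℂ) * Complex.exp (Complex.I * (t : ℂ) * (α : ℂ))
        - ((q : ℝ) : ℂ) * Complex.exp (Complex.I * (t : ℂ) * (β : ℂ))) *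
      (starRingEnd ℂ) (((r : ℝ) : ℂ) * Complex.exp (Complex.I * (t : ℂ) * (γ : ℂ))
        - ((s : ℝ) : ℂ) * Complex.exp (Complex.I * (t : ℂ) * (δ : ℂ)))).re
      = p * r * Real.cos (t * (α - γ)) - p * s * Real.cos (t * (α - δ))
        - q * r * Real.cos (t * (β - γ)) + q * s * Real.cos (t * (β - δ)) := by
  rw [map_sub, mul_sub, sub_mul, sub_mul]
  simp only [Complex.sub_re]
  rw [re_mul_conj_exp, re_mul_conj_exp, re_mul_conj_exp, re_mul_conj_exp]
  ring

private lemma abs_sq_sum_expand (S : Finset ℕ) (t : ℝ) (p q α β : ℕ → ℝ) :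
    ‖∑ j ∈ S, (((p j : ℝ) : ℂ) * Complex.exp (Complex.I * (t : ℂ) * ((α j : ℝ) : ℂ))
        - ((q j : ℝ) : ℂ) * Complex.exp (Complex.I * (t : ℂ) * ((β j : ℝ) : ℂ)))‖ ^ 2
      = ∑ j ∈ S, ∑ k ∈ S,
          (p j * p k * Real.cos (t * (α j - α k)) - p j * q k * Real.cos (t * (α j - β k))
           - q j * p k * Real.cos (t * (β j - α k)) + q j * q k * Real.cos (t * (β j - β k))) := by
  have habs : ∀ z : ℂ, ‖z‖ ^ 2 = (z * (starRingEnd ℂ) z).re := fun z => by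
    rw [Complex.mul_conj, Complex.sq_norm, Complex.ofReal_re]
  rw [habs, map_sum, Finset.sum_mul_sum, Complex.re_sum]
  refine Finset.sum_congr rfl fun j _ => ?_
  rw [Complex.re_sum]
  exact Finset.sum_congr rfl fun k _ => re_sub_mul_conj_sub t _ _ _ _ _ _ _ _


private lemma integrable_combo {a : ℝ} (ha : 0 < a) (c1 c2 c3 c4 e1 e2 e3 e4 : ℝ) :
    Integrable (fun t : ℝ =>
      (c1 * Real.cos (t * e1) - c2 * Real.cos (t * e2) - c3 * Real.cos (t * e3)
        + c4 * Real.cos (t * e4)) * Real.exp (-a * |t|)) := by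
  have heq : (fun t : ℝ =>
      (c1 * Real.cos (t * e1) - c2 * Real.cos (t * e2) - c3 * Real.cos (t * e3)
        + c4 * Real.cos (t * e4)) * Real.exp (-a * |t|))
      = fun t : ℝ => c1 * (Real.cos (t * e1) * Real.exp (-a * |t|))
          - c2 * (Real.cos (t * e2) * Real.exp (-a * |t|))
          - c3 * (Real.cos (t * e3) * Real.exp (-a * |t|))
          + c4 * (Real.cos (t * e4) * Real.exp (-a * |t|)) := by
    funext t; ring
  rw [heq]
  exact ((((integrable_cos_mul_exp ha e1).const_mul c1).sub
      ((integrable_cos_mul_exp ha e2).const_mul c2)).sub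
      ((integrable_cos_mul_exp ha e3).const_mul c3)).add
      ((integrable_cos_mul_exp ha e4).const_mul c4)

private lemma integral_combo {a : ℝ} (ha : 0 < a) (c1 c2 c3 c4 e1 e2 e3 e4 : ℝ) :
    ∫ t : ℝ, (c1 * Real.cos (t * e1) - c2 * Real.cos (t * e2) - c3 * Real.cos (t * e3)
        + c4 * Real.cos (t * e4)) * Real.exp (-a * |t|)
      = c1 * (2 * a / (a ^ 2 + e1 ^ 2)) - c2 * (2 * a / (a ^ 2 + e2 ^ 2))
        - c3 * (2 * a / (a ^ 2 + e3 ^ 2)) + c4 * (2 * a / (a ^ 2 + e4 ^ 2)) := by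
  have heq : (fun t : ℝ =>
      (c1 * Real.cos (t * e1) - c2 * Real.cos (t * e2) - c3 * Real.cos (t * e3)
        + c4 * Real.cos (t * e4)) * Real.exp (-a * |t|))
      = fun t : ℝ => c1 * (Real.cos (t * e1) * Real.exp (-a * |t|))
          - c2 * (Real.cos (t * e2) * Real.exp (-a * |t|))
          - c3 * (Real.cos (t * e3) * Real.exp (-a * |t|))
          + c4 * (Real.cos (t * e4) * Real.exp (-a * |t|)) := by
    funext t; ring
  have h1 := integrable_cos_mul_exp ha e1
  have h2 := integrable_cos_mul_exp ha e2
  have h3 := integrable_cos_mul_exp ha e3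
  have h4 := integrable_cos_mul_exp ha e4
  rw [show (∫ t : ℝ, (c1 * Real.cos (t * e1) - c2 * Real.cos (t * e2) - c3 * Real.cos (t * e3)
        + c4 * Real.cos (t * e4)) * Real.exp (-a * |t|))
      = ∫ t : ℝ, (c1 * (Real.cos (t * e1) * Real.exp (-a * |t|))
          - c2 * (Real.cos (t * e2) * Real.exp (-a * |t|))
          - c3 * (Real.cos (t * e3) * Real.exp (-a * |t|))
          + c4 * (Real.cos (t * e4) * Real.exp (-a * |t|)))
    from congrArg _ heq]
  have hA : Integrable (fun t : ℝ => c1 * (Real.cos (t * e1) * Real.exp (-a * |t|))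
      - c2 * (Real.cos (t * e2) * Real.exp (-a * |t|))) volume :=
    (h1.const_mul c1).sub (h2.const_mul c2)
  have hB : Integrable (fun t : ℝ => c1 * (Real.cos (t * e1) * Real.exp (-a * |t|))
      - c2 * (Real.cos (t * e2) * Real.exp (-a * |t|))
      - c3 * (Real.cos (t * e3) * Real.exp (-a * |t|))) volume :=
    hA.sub (h3.const_mul c3)
  rw [integral_add hB (h4.const_mul c4),
    integral_sub hA (h3.const_mul c3),
    integral_sub (h1.const_mul c1) (h2.const_mul c2),
    integral_const_mul, integral_const_mul, integral_const_mul, integral_const_mul,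
    integral_cos_mul_exp_abs ha e1, integral_cos_mul_exp_abs ha e2,
    integral_cos_mul_exp_abs ha e3, integral_cos_mul_exp_abs ha e4]

/-- The weight `v_{j,m} = n⁻ᵐ ((n - j + 1)^m - (n - j)^m)`. -/
noncomputable def vWeight (n m j : ℕ) : ℝ :=
  (((n - j + 1 : ℕ) : ℝ) ^ m - ((n - j : ℕ) : ℝ) ^ m) / (n : ℝ) ^ m

/-- The empirical characteristic function of the transformed data `x j ^ (1/m)`. -/
noncomputable def phiEmp (n m : ℕ) (x : ℕ → ℝ) (t : ℝ) : ℂ :=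
  (n : ℂ)⁻¹ * ∑ j ∈ Finset.Icc 1 n,
    Complex.exp (Complex.I * (t : ℂ) * ((x j ^ ((m : ℝ)⁻¹) : ℝ) : ℂ))

/-- The V-empirical characteristic function of the minimum of `m` sample values, expressed
as a single weighted sum. -/
noncomputable def xiEmp (n m : ℕ) (x : ℕ → ℝ) (t : ℝ) : ℂ :=
  ∑ j ∈ Finset.Icc 1 n, ((vWeight n m j : ℝ) : ℂ) * Complex.exp (Complex.I * (t : ℂ) * (x j : ℂ))

/-- Computational form of the V-statistic `S_{n,m,a}` with the Laplace kernel weight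
`w_a(t) = exp (-a |t|)`. -/
theorem vStatistic_laplace_eq (n m : ℕ) (hn : 1 ≤ n) (hm : 1 ≤ m) (x : ℕ → ℝ)
    (hmono : ∀ j k, 1 ≤ j → j ≤ k → k ≤ n → x j ≤ x k)
    (hx : ∀ j, 1 ≤ j → j ≤ n → 1 ≤ x j) (a : ℝ) (ha : 0 < a) :
    (n : ℝ) * ∫ t : ℝ, ‖phiEmp n m x t - xiEmp n m x t‖ ^ 2 * Real.exp (-a * |t|)
      = (n : ℝ)⁻¹ * ∑ j ∈ Finset.Icc 1 n, ∑ k ∈ Finset.Icc 1 n,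
          (2 * a / (a ^ 2 + (x j ^ ((m : ℝ)⁻¹) - x k ^ ((m : ℝ)⁻¹)) ^ 2)
            - (n : ℝ) * vWeight n m j * (4 * a / (a ^ 2 + (x j - x k ^ ((m : ℝ)⁻¹)) ^ 2))
            + (n : ℝ) ^ 2 * vWeight n m j * vWeight n m k *
                (2 * a / (a ^ 2 + (x j - x k) ^ 2))) := by
  have hn0 : (n : ℝ) ≠ 0 := Nat.cast_ne_zero.mpr (by omega)
  set S := Finset.Icc 1 n with hS
  -- the pointwise expansion of the integrand
  set G : ℕ → ℕ → ℝ → ℝ := fun j k t =>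
    ((n : ℝ)⁻¹ * (n : ℝ)⁻¹ * Real.cos (t * (x j ^ ((m : ℝ)⁻¹) - x k ^ ((m : ℝ)⁻¹)))
      - (n : ℝ)⁻¹ * vWeight n m k * Real.cos (t * (x j ^ ((m : ℝ)⁻¹) - x k))
      - vWeight n m j * (n : ℝ)⁻¹ * Real.cos (t * (x j - x k ^ ((m : ℝ)⁻¹)))
      + vWeight n m j * vWeight n m k * Real.cos (t * (x j - x k))) * Real.exp (-a * |t|)
    with hG
  have hzd : ∀ t : ℝ, phiEmp n m x t - xiEmp n m x t
      = ∑ j ∈ S, ((((n : ℝ)⁻¹ : ℝ) : ℂ)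
            * Complex.exp (Complex.I * (t : ℂ) * ((x j ^ ((m : ℝ)⁻¹) : ℝ) : ℂ))
          - ((vWeight n m j : ℝ) : ℂ)
            * Complex.exp (Complex.I * (t : ℂ) * ((x j : ℝ) : ℂ))) := by
    intro t
    rw [phiEmp, xiEmp, Finset.mul_sum, ← Finset.sum_sub_distrib]
    refine Finset.sum_congr rfl fun j _ => ?_
    push_cast
    ring
  have hpoint : ∀ t : ℝ,
      ‖phiEmp n m x t - xiEmp n m x t‖ ^ 2 * Real.exp (-a * |t|)
        = ∑ j ∈ S, ∑ k ∈ S, G j k t := by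
    intro t
    rw [hzd t, abs_sq_sum_expand S t (fun _ => (n : ℝ)⁻¹) (fun j => vWeight n m j)
      (fun j => x j ^ ((m : ℝ)⁻¹)) x, Finset.sum_mul]
    refine Finset.sum_congr rfl fun j _ => ?_
    rw [Finset.sum_mul]
  have hGint : ∀ j k, Integrable (G j k) := by
    intro j k
    exact integrable_combo ha ((n : ℝ)⁻¹ * (n : ℝ)⁻¹) ((n : ℝ)⁻¹ * vWeight n m k)
      (vWeight n m j * (n : ℝ)⁻¹) (vWeight n m j * vWeight n m k)
      (x j ^ ((m : ℝ)⁻¹) - x k ^ ((m : ℝ)⁻¹)) (x j ^ ((m : ℝ)⁻¹) - x k)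
      (x j - x k ^ ((m : ℝ)⁻¹)) (x j - x k)
  have hGval : ∀ j k, ∫ t : ℝ, G j k t
      = (n : ℝ)⁻¹ * (n : ℝ)⁻¹ * (2 * a / (a ^ 2 + (x j ^ ((m : ℝ)⁻¹) - x k ^ ((m : ℝ)⁻¹)) ^ 2))
        - (n : ℝ)⁻¹ * vWeight n m k * (2 * a / (a ^ 2 + (x j ^ ((m : ℝ)⁻¹) - x k) ^ 2))
        - vWeight n m j * (n : ℝ)⁻¹ * (2 * a / (a ^ 2 + (x j - x k ^ ((m : ℝ)⁻¹)) ^ 2))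
        + vWeight n m j * vWeight n m k * (2 * a / (a ^ 2 + (x j - x k) ^ 2)) := by
    intro j k
    exact integral_combo ha ((n : ℝ)⁻¹ * (n : ℝ)⁻¹) ((n : ℝ)⁻¹ * vWeight n m k)
      (vWeight n m j * (n : ℝ)⁻¹) (vWeight n m j * vWeight n m k)
      (x j ^ ((m : ℝ)⁻¹) - x k ^ ((m : ℝ)⁻¹)) (x j ^ ((m : ℝ)⁻¹) - x k)
      (x j - x k ^ ((m : ℝ)⁻¹)) (x j - x k)
  have hI : (∫ t : ℝ, ‖phiEmp n m x t - xiEmp n m x t‖ ^ 2 * Real.exp (-a * |t|))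
      = ∑ j ∈ S, ∑ k ∈ S, ∫ t : ℝ, G j k t := by
    simp only [hpoint]
    rw [integral_finset_sum S (fun j _ => integrable_finset_sum S (fun k _ => hGint j k))]
    exact Finset.sum_congr rfl fun j _ => integral_finset_sum S (fun k _ => hGint j k)
  have hswap : ∑ j ∈ S, ∑ k ∈ S,
        vWeight n m j * (2 * a / (a ^ 2 + (x j - x k ^ ((m : ℝ)⁻¹)) ^ 2))
      = ∑ j ∈ S, ∑ k ∈ S,
        vWeight n m k * (2 * a / (a ^ 2 + (x j ^ ((m : ℝ)⁻¹) - x k) ^ 2)) := by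
    rw [Finset.sum_comm]
    refine Finset.sum_congr rfl fun k _ => Finset.sum_congr rfl fun j _ => ?_
    rw [show (x k ^ ((m : ℝ)⁻¹) - x j) ^ 2 = (x j - x k ^ ((m : ℝ)⁻¹)) ^ 2 from by ring]
  rw [hI, Finset.mul_sum]
  have hsplit : ∀ j ∈ S, ∀ k ∈ S, (n : ℝ) * ∫ t : ℝ, G j k t
      = (n : ℝ)⁻¹ *
          (2 * a / (a ^ 2 + (x j ^ ((m : ℝ)⁻¹) - x k ^ ((m : ℝ)⁻¹)) ^ 2)
            - (n : ℝ) * vWeight n m j * (4 * a / (a ^ 2 + (x j - x k ^ ((m : ℝ)⁻¹)) ^ 2))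
            + (n : ℝ) ^ 2 * vWeight n m j * vWeight n m k *
                (2 * a / (a ^ 2 + (x j - x k) ^ 2)))
        + (vWeight n m j * (2 * a / (a ^ 2 + (x j - x k ^ ((m : ℝ)⁻¹)) ^ 2))
            - vWeight n m k * (2 * a / (a ^ 2 + (x j ^ ((m : ℝ)⁻¹) - x k) ^ 2))) := by
    intro j _ k _
    rw [hGval j k,
      show (4 * a / (a ^ 2 + (x j - x k ^ ((m : ℝ)⁻¹)) ^ 2))
        = 2 * (2 * a / (a ^ 2 + (x j - x k ^ ((m : ℝ)⁻¹)) ^ 2)) from by ring]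
    generalize (2 * a / (a ^ 2 + (x j ^ ((m : ℝ)⁻¹) - x k ^ ((m : ℝ)⁻¹)) ^ 2)) = A
    generalize (2 * a / (a ^ 2 + (x j ^ ((m : ℝ)⁻¹) - x k) ^ 2)) = B2
    generalize (2 * a / (a ^ 2 + (x j - x k ^ ((m : ℝ)⁻¹)) ^ 2)) = B3
    generalize (2 * a / (a ^ 2 + (x j - x k) ^ 2)) = C
    field_simp
    ring
  calc ∑ j ∈ S, (n : ℝ) * ∑ k ∈ S, ∫ t : ℝ, G j k t
      = ∑ j ∈ S, ∑ k ∈ S, (n : ℝ) * ∫ t : ℝ, G j k t := by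
        exact Finset.sum_congr rfl fun j _ => Finset.mul_sum _ _ _
    _ = ∑ j ∈ S, ∑ k ∈ S,
          ((n : ℝ)⁻¹ *
            (2 * a / (a ^ 2 + (x j ^ ((m : ℝ)⁻¹) - x k ^ ((m : ℝ)⁻¹)) ^ 2)
              - (n : ℝ) * vWeight n m j * (4 * a / (a ^ 2 + (x j - x k ^ ((m : ℝ)⁻¹)) ^ 2))
              + (n : ℝ) ^ 2 * vWeight n m j * vWeight n m k *
                  (2 * a / (a ^ 2 + (x j - x k) ^ 2)))
          + (vWeight n m j * (2 * a / (a ^ 2 + (x j - x k ^ ((m : ℝ)⁻¹)) ^ 2))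
              - vWeight n m k * (2 * a / (a ^ 2 + (x j ^ ((m : ℝ)⁻¹) - x k) ^ 2)))) := by
        exact Finset.sum_congr rfl fun j hj => Finset.sum_congr rfl fun k hk => hsplit j hj k hk
    _ = (∑ j ∈ S, ∑ k ∈ S, (n : ℝ)⁻¹ *
            (2 * a / (a ^ 2 + (x j ^ ((m : ℝ)⁻¹) - x k ^ ((m : ℝ)⁻¹)) ^ 2)
              - (n : ℝ) * vWeight n m j * (4 * a / (a ^ 2 + (x j - x k ^ ((m : ℝ)⁻¹)) ^ 2))
              + (n : ℝ) ^ 2 * vWeight n m j * vWeight n m k *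
                  (2 * a / (a ^ 2 + (x j - x k) ^ 2))))
        + ((∑ j ∈ S, ∑ k ∈ S,
              vWeight n m j * (2 * a / (a ^ 2 + (x j - x k ^ ((m : ℝ)⁻¹)) ^ 2)))
          - ∑ j ∈ S, ∑ k ∈ S,
              vWeight n m k * (2 * a / (a ^ 2 + (x j ^ ((m : ℝ)⁻¹) - x k) ^ 2))) := by
        rw [← Finset.sum_sub_distrib, ← Finset.sum_add_distrib]
        exact Finset.sum_congr rfl fun j _ => by
          rw [← Finset.sum_sub_distrib, ← Finset.sum_add_distrib]
    _ = (n : ℝ)⁻¹ * ∑ j ∈ S, ∑ k ∈ S,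
          (2 * a / (a ^ 2 + (x j ^ ((m : ℝ)⁻¹) - x k ^ ((m : ℝ)⁻¹)) ^ 2)
            - (n : ℝ) * vWeight n m j * (4 * a / (a ^ 2 + (x j - x k ^ ((m : ℝ)⁻¹)) ^ 2))
            + (n : ℝ) ^ 2 * vWeight n m j * vWeight n m k *
                (2 * a / (a ^ 2 + (x j - x k) ^ 2))) := by
        rw [hswap, sub_self, add_zero, Finset.mul_sum]
        exact Finset.sum_congr rfl fun j _ => (Finset.mul_sum _ _ _).symm
end

section
/- Let n ≥ 1 and m ≥ 1 be integers, let x_1 ≤ x_2 ≤ ⋯ ≤ x_n be real numbers with x_j ≥ 1 for all j, and let a > 0. Define φ_n(t) = (1/n) Σ_{j=1}^n exp(i t x_j^(1/m)) and ξ_n(t) = Σ_{j=1}^n v_{j,m} exp(i t x_j), where v_{j,m} = n^(−m)[(n − j + 1)^m − (n − j)^m]. Then n · ∫_{−∞}^{∞} |φ_n(t) − ξ_n(t)|² e^(−a t²) dt = (1/n) √(π/a) Σ_{j=1}^n Σ_{k=1}^n [ exp(−(x_j^(1/m) − x_k^(1/m))²/(4a)) − 2 n v_{j,m} exp(−(x_j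 − x_k^(1/m))²/(4a)) + n² v_{j,m} v_{k,m} exp(−(x_j − x_k)²/(4a)) ]. -/
open Complex MeasureTheory Finset Real

noncomputable def mixFn (a c₁ c₂ y₁ y₂ : ℝ) : ℝ → ℂ := fun t =>
  ((c₁ * c₂ : ℝ) : ℂ) * Complex.exp (-(a : ℂ) * t ^ 2 + Complex.I * ((y₁ : ℂ) - y₂) * t + 0)

lemma mix_prod_eq (a c₁ c₂ y₁ y₂ t : ℝ) :
    ((c₁ : ℂ) * Complex.exp (Complex.I * t * y₁)) *
      (starRingEnd ℂ) ((c₂ : ℂ) * Complex.exp (Complex.I * t * y₂)) *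
      ((Real.exp (-a * t ^ 2) : ℝ) : ℂ) = mixFn a c₁ c₂ y₁ y₂ t := by
  have h1 : (starRingEnd ℂ) ((c₂ : ℂ) * Complex.exp (Complex.I * t * y₂))
      = (c₂ : ℂ) * Complex.exp (-(Complex.I * t * y₂)) := by
    simp only [map_mul, ← Complex.exp_conj, Complex.conj_I, Complex.conj_ofReal]
    ring_nf
  rw [h1, mixFn]
  rw [show ((Real.exp (-a * t ^ 2) : ℝ) : ℂ) = Complex.exp (((-a * t^2 : ℝ) : ℂ)) by
    rw [Complex.ofReal_exp]]
  rw [show (-(a:ℂ) * t ^ 2 + Complex.I * ((y₁ : ℂ) - y₂) * t + 0)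
      = Complex.I * t * y₁ + (-(Complex.I * t * y₂)) + ((-a * t^2 : ℝ) : ℂ) by push_cast; ring]
  rw [Complex.exp_add, Complex.exp_add]
  push_cast
  ring

lemma mix_integrable {a : ℝ} (ha : 0 < a) (c₁ c₂ y₁ y₂ : ℝ) :
    Integrable (mixFn a c₁ c₂ y₁ y₂) := by
  apply Integrable.const_mul
  have h : (0:ℝ) < ((a:ℂ)).re := by simpa using ha
  simpa using integrable_cexp_quadratic h (Complex.I * ((y₁:ℂ) - y₂)) 0

lemma mix_integral {a : ℝ} (ha : 0 < a) (c₁ c₂ y₁ y₂ : ℝ) :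
    ∫ t : ℝ, mixFn a c₁ c₂ y₁ y₂ t =
      ((c₁ * c₂ * (Real.sqrt (Real.pi / a) * Real.exp (-(y₁ - y₂) ^ 2 / (4 * a))) : ℝ) : ℂ) := by
  have hb : ((-(a:ℂ))).re < 0 := by simpa using ha
  have hane : (a : ℂ) ≠ 0 := by exact_mod_cast ha.ne'
  simp only [mixFn]
  rw [MeasureTheory.integral_const_mul, integral_cexp_quadratic hb]
  have h1 : ((π : ℂ) / -(-(a:ℂ))) = ((Real.pi / a : ℝ) : ℂ) := by push_cast; ring
  have h2 : (0 : ℂ) - (Complex.I * ((y₁:ℂ) - y₂))^2 / (4 * (-(a:ℂ)))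
      = ((-(y₁ - y₂)^2 / (4*a) : ℝ) : ℂ) := by
    rw [mul_pow, Complex.I_sq]
    push_cast
    field_simp
    ring
  rw [h1, h2]
  have h3 : ((Real.pi/a : ℝ):ℂ) ^ (1/2 : ℂ) = ((Real.sqrt (Real.pi/a) : ℝ) : ℂ) := by
    rw [Real.sqrt_eq_rpow, Complex.ofReal_cpow (by positivity)]
    norm_num
  rw [h3, ← Complex.ofReal_exp, ← Complex.ofReal_mul, ← Complex.ofReal_mul]

lemma integral_sub_sub_add {A B C D : ℝ → ℂ} (hA : MeasureTheory.Integrable A)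
    (hB : MeasureTheory.Integrable B) (hC : MeasureTheory.Integrable C)
    (hD : MeasureTheory.Integrable D) :
    ∫ t : ℝ, (A t - B t - C t + D t)
      = (∫ t : ℝ, A t) - (∫ t : ℝ, B t) - (∫ t : ℝ, C t) + ∫ t : ℝ, D t := by
  have h1 : MeasureTheory.Integrable (fun t => A t - B t) := hA.sub hB
  have h2 : MeasureTheory.Integrable (fun t => A t - B t - C t) := h1.sub hC
  rw [MeasureTheory.integral_add h2 hD, MeasureTheory.integral_sub h1 hC,
    MeasureTheory.integral_sub hA hB]

lemma double_sum_combine (S : Finset ℕ) (p q r s : ℕ → ℕ → ℝ)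
    (hqr : ∑ j ∈ S, ∑ k ∈ S, q j k = ∑ j ∈ S, ∑ k ∈ S, r j k) :
    ∑ j ∈ S, ∑ k ∈ S, (p j k - q j k - r j k + s j k)
      = ∑ j ∈ S, ∑ k ∈ S, (p j k - 2 * r j k + s j k) := by
  simp only [Finset.sum_add_distrib, Finset.sum_sub_distrib, ← Finset.mul_sum]
  rw [hqr]
  ring

lemma vstat_aux (n : ℕ) (hn : 1 ≤ n) (a : ℝ) (ha : 0 < a) (u w v : ℕ → ℝ) :
    (n : ℝ) * ∫ t : ℝ, ‖(∑ j ∈ Finset.Icc 1 n,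
        ((((n:ℝ)⁻¹ : ℝ) : ℂ) * Complex.exp (Complex.I * (t:ℂ) * ((u j : ℝ) : ℂ))
          - ((v j : ℝ) : ℂ) * Complex.exp (Complex.I * (t:ℂ) * ((w j : ℝ) : ℂ))))‖ ^ 2
        * Real.exp (-a * t ^ 2)
      = (n : ℝ)⁻¹ * Real.sqrt (Real.pi / a) *
          ∑ j ∈ Finset.Icc 1 n, ∑ k ∈ Finset.Icc 1 n,
            (Real.exp (-(u j - u k) ^ 2 / (4 * a))
              - 2 * (n : ℝ) * v j * Real.exp (-(w j - u k) ^ 2 / (4 * a))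
              + (n : ℝ) ^ 2 * v j * v k * Real.exp (-(w j - w k) ^ 2 / (4 * a))) := by
  have hn0 : (n : ℝ) ≠ 0 := Nat.cast_ne_zero.mpr (by omega)
  set S := Finset.Icc 1 n with hS
  set f : ℕ → ℝ → ℂ := fun j t =>
    (((n:ℝ)⁻¹ : ℝ) : ℂ) * Complex.exp (Complex.I * (t:ℂ) * ((u j : ℝ) : ℂ))
      - ((v j : ℝ) : ℂ) * Complex.exp (Complex.I * (t:ℂ) * ((w j : ℝ) : ℂ)) with hf
  -- pointwise expansion of each pair product into four mixFn terms
  have hg : ∀ j k : ℕ, ∀ t : ℝ, f j t * (starRingEnd ℂ) (f k t) * ((Real.exp (-a * t ^ 2) : ℝ) : ℂ)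
      = mixFn a (n:ℝ)⁻¹ (n:ℝ)⁻¹ (u j) (u k) t - mixFn a (n:ℝ)⁻¹ (v k) (u j) (w k) t
        - mixFn a (v j) (n:ℝ)⁻¹ (w j) (u k) t + mixFn a (v j) (v k) (w j) (w k) t := by
    intro j k t
    simp only [← mix_prod_eq, hf, map_sub]
    ring
  have hint : ∀ j k : ℕ, Integrable (fun t : ℝ =>
      f j t * (starRingEnd ℂ) (f k t) * ((Real.exp (-a * t ^ 2) : ℝ) : ℂ)) := by
    intro j k
    simp only [hg]
    exact (((mix_integrable ha _ _ _ _).sub (mix_integrable ha _ _ _ _)).sub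
      (mix_integrable ha _ _ _ _)).add (mix_integrable ha _ _ _ _)
  -- the integrand equals the real part of the double sum
  have hpt : ∀ t : ℝ, ‖(∑ j ∈ S, f j t)‖ ^ 2 * Real.exp (-a * t ^ 2)
      = (∑ j ∈ S, ∑ k ∈ S,
          f j t * (starRingEnd ℂ) (f k t) * ((Real.exp (-a * t ^ 2) : ℝ) : ℂ)).re := by
    intro t
    have h1 : ∑ j ∈ S, ∑ k ∈ S,
        f j t * (starRingEnd ℂ) (f k t) * ((Real.exp (-a * t ^ 2) : ℝ) : ℂ)
        = (∑ j ∈ S, f j t) * (starRingEnd ℂ) (∑ j ∈ S, f j t)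
            * ((Real.exp (-a * t ^ 2) : ℝ) : ℂ) := by
      rw [map_sum, Finset.sum_mul, Finset.sum_mul]
      refine Finset.sum_congr rfl fun j _ => ?_
      rw [Finset.mul_sum, Finset.sum_mul]
    rw [h1, Complex.mul_conj, ← Complex.ofReal_mul, Complex.ofReal_re, ← Complex.sq_norm]
  calc (n : ℝ) * ∫ t : ℝ, ‖(∑ j ∈ S, f j t)‖ ^ 2 * Real.exp (-a * t ^ 2)
      = (n : ℝ) * ∫ t : ℝ, (∑ j ∈ S, ∑ k ∈ S,
          f j t * (starRingEnd ℂ) (f k t) * ((Real.exp (-a * t ^ 2) : ℝ) : ℂ)).re := by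
        simp only [hpt]
    _ = (n : ℝ) * (∫ t : ℝ, ∑ j ∈ S, ∑ k ∈ S,
          f j t * (starRingEnd ℂ) (f k t) * ((Real.exp (-a * t ^ 2) : ℝ) : ℂ)).re := by
        have hGint : Integrable (fun t : ℝ => ∑ j ∈ S, ∑ k ∈ S,
            f j t * (starRingEnd ℂ) (f k t) * ((Real.exp (-a * t ^ 2) : ℝ) : ℂ)) :=
          integrable_finset_sum _ fun j _ => integrable_finset_sum _ fun k _ => hint j k
        have h2 := integral_re (𝕜 := ℂ) hGint
        simp only [RCLike.re_to_complex] at h2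
        rw [h2]
    _ = (n : ℝ) * (∑ j ∈ S, ∑ k ∈ S, (∫ t : ℝ,
          f j t * (starRingEnd ℂ) (f k t) * ((Real.exp (-a * t ^ 2) : ℝ) : ℂ))).re := by
        congr 2
        rw [MeasureTheory.integral_finset_sum _
          (fun j _ => integrable_finset_sum _ fun k _ => hint j k)]
        exact Finset.sum_congr rfl fun j _ =>
          MeasureTheory.integral_finset_sum _ fun k _ => hint j k
    _ = (n : ℝ) * ∑ j ∈ S, ∑ k ∈ S,
          ((n:ℝ)⁻¹ * (n:ℝ)⁻¹ * (Real.sqrt (Real.pi / a) * Real.exp (-(u j - u k) ^ 2 / (4 * a)))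
            - (n:ℝ)⁻¹ * v k * (Real.sqrt (Real.pi / a) * Real.exp (-(u j - w k) ^ 2 / (4 * a)))
            - v j * (n:ℝ)⁻¹ * (Real.sqrt (Real.pi / a) * Real.exp (-(w j - u k) ^ 2 / (4 * a)))
            + v j * v k * (Real.sqrt (Real.pi / a) * Real.exp (-(w j - w k) ^ 2 / (4 * a)))) := by
        have hval : ∀ j k : ℕ, (∫ t : ℝ,
            f j t * (starRingEnd ℂ) (f k t) * ((Real.exp (-a * t ^ 2) : ℝ) : ℂ))
            = ((((n:ℝ)⁻¹ * (n:ℝ)⁻¹ * (Real.sqrt (Real.pi / a) * Real.exp (-(u j - u k) ^ 2 / (4 * a)))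
              - (n:ℝ)⁻¹ * v k * (Real.sqrt (Real.pi / a) * Real.exp (-(u j - w k) ^ 2 / (4 * a)))
              - v j * (n:ℝ)⁻¹ * (Real.sqrt (Real.pi / a) * Real.exp (-(w j - u k) ^ 2 / (4 * a)))
              + v j * v k * (Real.sqrt (Real.pi / a) * Real.exp (-(w j - w k) ^ 2 / (4 * a)))) : ℝ) : ℂ) := by
          intro j k
          simp only [hg]
          rw [integral_sub_sub_add (mix_integrable ha _ _ _ _) (mix_integrable ha _ _ _ _)
              (mix_integrable ha _ _ _ _) (mix_integrable ha _ _ _ _),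
            mix_integral ha, mix_integral ha, mix_integral ha, mix_integral ha]
          push_cast
          ring
        simp only [hval]
        simp only [← Complex.ofReal_sum, Complex.ofReal_re]
    _ = _ := by
        have hswap : ∑ j ∈ S, ∑ k ∈ S,
            (n:ℝ)⁻¹ * v k * (Real.sqrt (Real.pi / a) * Real.exp (-(u j - w k) ^ 2 / (4 * a)))
            = ∑ j ∈ S, ∑ k ∈ S,
              v j * (n:ℝ)⁻¹ * (Real.sqrt (Real.pi / a) * Real.exp (-(w j - u k) ^ 2 / (4 * a))) := by
          rw [Finset.sum_comm]
          refine Finset.sum_congr rfl fun j _ => Finset.sum_congr rfl fun k _ => ?_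
          rw [show (u k - w j) ^ 2 = (w j - u k) ^ 2 by ring]
          ring
        rw [double_sum_combine S _ _ _ _ hswap]
        simp only [Finset.mul_sum]
        refine Finset.sum_congr rfl fun j _ => Finset.sum_congr rfl fun k _ => ?_
        field_simp

/-- Computational form of the V-statistic `S_{n,m,a}` with the Gaussian kernel weight
`w̃_a(t) = exp (-a t²)`. -/
theorem vStatistic_gaussian_eq (n m : ℕ) (hn : 1 ≤ n) (hm : 1 ≤ m) (x : ℕ → ℝ)
    (hmono : ∀ j k, 1 ≤ j → j ≤ k → k ≤ n → x j ≤ x k)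
    (hx : ∀ j, 1 ≤ j → j ≤ n → 1 ≤ x j) (a : ℝ) (ha : 0 < a) :
    (n : ℝ) * ∫ t : ℝ, ‖phiEmp n m x t - xiEmp n m x t‖ ^ 2 * Real.exp (-a * t ^ 2)
      = (n : ℝ)⁻¹ * Real.sqrt (Real.pi / a) *
          ∑ j ∈ Finset.Icc 1 n, ∑ k ∈ Finset.Icc 1 n,
            (Real.exp (-(x j ^ ((m : ℝ)⁻¹) - x k ^ ((m : ℝ)⁻¹)) ^ 2 / (4 * a))
              - 2 * (n : ℝ) * vWeight n m j *
                  Real.exp (-(x j - x k ^ ((m : ℝ)⁻¹)) ^ 2 / (4 * a))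
              + (n : ℝ) ^ 2 * vWeight n m j * vWeight n m k *
                  Real.exp (-(x j - x k) ^ 2 / (4 * a))) := by
  have hdiff : ∀ t : ℝ, phiEmp n m x t - xiEmp n m x t = ∑ j ∈ Finset.Icc 1 n,
      ((((n:ℝ)⁻¹ : ℝ) : ℂ) * Complex.exp (Complex.I * (t:ℂ) * ((x j ^ ((m:ℝ)⁻¹) : ℝ) : ℂ))
        - ((vWeight n m j : ℝ) : ℂ) * Complex.exp (Complex.I * (t:ℂ) * ((x j : ℝ) : ℂ))) := by
    intro t
    simp only [phiEmp, xiEmp, Finset.mul_sum, ← Finset.sum_sub_distrib]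
    refine Finset.sum_congr rfl fun j _ => ?_
    push_cast
    ring
  simp only [hdiff]
  exact vstat_aux n hn a ha (fun j => x j ^ ((m:ℝ)⁻¹)) x (vWeight n m)
end
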